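/- Let H be a commutative and cocommutative bialgebra over a commutative ring A. Then for all integers k, l ≥ 0, μ ∘ (Ψ^k ⊗ Ψ^l) ∘ μ* = Ψ^{k+l}, i.e., for every h ∈ H (in Sweedler notation) Ψ^k(h_(1)) · Ψ^l(h_(2)) = Ψ^{k+l}(h). -/

import Mathlib

open TensorProduct

/-- The Hopf `k`-th power map `Ψ^k := μ^(k) ∘ μ*(k)` of a bialgebra, defined recursively
(equivalently, the `k`-th convolution power of the identity), with the conventions
`Ψ^0 = e ∘ e*` (unit composed with counit) and `Ψ^1 = id`. -/
noncomputable def hopfPower (A H : Type*) [CommRing A] [Ring H]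
    [Bialgebra A H] : ℕ → (H →ₗ[A] H)
  | 0 => (Algebra.linearMap A H) ∘ₗ (Coalgebra.counit : H →ₗ[A] A)
  | (k + 1) =>
      (LinearMap.mul' A H) ∘ₗ (LinearMap.rTensor H (hopfPower A H k)) ∘ₗ
        (Coalgebra.comul : H →ₗ[A] H ⊗[A] H)

section Conv

variable {A H : Type*} [CommRing A] [Ring H] [Bialgebra A H]

open Coalgebra

/-- Convolution product of two linear endomorphisms of a bialgebra. -/
noncomputable def hopfConv (f g : H →ₗ[A] H) : H →ₗ[A] H :=
  LinearMap.mul' A H ∘ₗ TensorProduct.map f g ∘ₗ (Coalgebra.comul : H →ₗ[A] H ⊗[A] H)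

lemma hopfConv_apply (f g : H →ₗ[A] H) (x : H) {ι : Type*} (repr : Coalgebra.Repr A x ι) :
    hopfConv f g x = ∑ i ∈ repr.index, f (repr.left i) * g (repr.right i) := by
  simp only [hopfConv, LinearMap.comp_apply, ← repr.eq, map_sum, TensorProduct.map_tmul,
    LinearMap.mul'_apply]

lemma one_hopfConv (f : H →ₗ[A] H) :
    hopfConv ((Algebra.linearMap A H) ∘ₗ (Coalgebra.counit : H →ₗ[A] A)) f = f := by
  ext x
  have repr := Coalgebra.Repr.arbitrary A x
  rw [hopfConv_apply _ _ x repr]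
  have h := congrArg (TensorProduct.lid A H) (Coalgebra.sum_counit_tmul_eq repr)
  simp only [map_sum, TensorProduct.lid_tmul, TensorProduct.lid_tmul, one_smul] at h
  calc ∑ i ∈ repr.index,
        (Algebra.linearMap A H ∘ₗ Coalgebra.counit) (repr.left i) * f (repr.right i)
      = ∑ i ∈ repr.index, Coalgebra.counit (R := A) (repr.left i) • f (repr.right i) := by
        simp [Algebra.smul_def]
    _ = f (∑ i ∈ repr.index, Coalgebra.counit (R := A) (repr.left i) • repr.right i) := by
        simp [map_sum, map_smul]
    _ = f x := by rw [h]

lemma hopfConv_one (f : H →ₗ[A] H) :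
    hopfConv f ((Algebra.linearMap A H) ∘ₗ (Coalgebra.counit : H →ₗ[A] A)) = f := by
  ext x
  have repr := Coalgebra.Repr.arbitrary A x
  rw [hopfConv_apply _ _ x repr]
  have h := congrArg (TensorProduct.rid A H) (Coalgebra.sum_tmul_counit_eq repr)
  simp only [map_sum, TensorProduct.rid_tmul, one_smul] at h
  calc ∑ i ∈ repr.index,
        f (repr.left i) * (Algebra.linearMap A H ∘ₗ Coalgebra.counit) (repr.right i)
      = ∑ i ∈ repr.index, Coalgebra.counit (R := A) (repr.right i) • f (repr.left i) := by
        simp [Algebra.smul_def, Algebra.commutes]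
    _ = f (∑ i ∈ repr.index, Coalgebra.counit (R := A) (repr.right i) • repr.left i) := by
        simp [map_sum, map_smul]
    _ = f x := by rw [h]

lemma hopfConv_assoc (f g h : H →ₗ[A] H) :
    hopfConv (hopfConv f g) h = hopfConv f (hopfConv g h) := by
  ext x
  have repr := Coalgebra.Repr.arbitrary A x
  have r₁ : ∀ i, Coalgebra.Repr A (repr.left i) (H × H) :=
    fun i => Coalgebra.Repr.arbitrary A (repr.left i)
  have r₂ : ∀ i, Coalgebra.Repr A (repr.right i) (H × H) :=
    fun i => Coalgebra.Repr.arbitrary A (repr.right i)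
  have key := Coalgebra.sum_map_tmul_tmul_eq f g h x (repr := repr) (a₁ := r₁) (a₂ := r₂)
  have key2 := congrArg (LinearMap.mul' A H ∘ₗ LinearMap.lTensor H (LinearMap.mul' A H)) key
  simp only [map_sum, LinearMap.comp_apply, LinearMap.lTensor_tmul,
    LinearMap.mul'_apply] at key2
  rw [hopfConv_apply _ _ x repr, hopfConv_apply _ _ x repr]
  calc ∑ i ∈ repr.index, hopfConv f g (repr.left i) * h (repr.right i)
      = ∑ i ∈ repr.index, ∑ j ∈ (r₁ i).index,
          f ((r₁ i).left j) * (g ((r₁ i).right j) * h (repr.right i)) := by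
        refine Finset.sum_congr rfl fun i _ => ?_
        rw [hopfConv_apply _ _ _ (r₁ i), Finset.sum_mul]
        simp [mul_assoc]
    _ = ∑ i ∈ repr.index, ∑ j ∈ (r₂ i).index,
          f (repr.left i) * (g ((r₂ i).left j) * h ((r₂ i).right j)) := key2.symm
    _ = ∑ i ∈ repr.index, f (repr.left i) * hopfConv g h (repr.right i) := by
        refine Finset.sum_congr rfl fun i _ => ?_
        rw [hopfConv_apply _ _ _ (r₂ i), Finset.mul_sum]

lemma hopfPower_succ' (k : ℕ) :
    hopfPower A H (k + 1) = hopfConv (hopfPower A H k) LinearMap.id := rfl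

end Conv

/-- If the bialgebra `H` is commutative and cocommutative, then for all
`k, l ≥ 0` one has `μ ∘ (Ψ^k ⊗ Ψ^l) ∘ μ* = Ψ^(k+l)`, i.e. in Sweedler notation
`Ψ^k(h₍₁₎) * Ψ^l(h₍₂₎) = Ψ^(k+l)(h)` for every `h ∈ H`. -/
theorem hopfPower_mul_comul (A H : Type*) [CommRing A] [CommRing H] [Bialgebra A H]
    (hcocomm : (TensorProduct.comm A H H).toLinearMap ∘ₗ
        (Coalgebra.comul : H →ₗ[A] H ⊗[A] H) = Coalgebra.comul)
    (k l : ℕ) :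
    (LinearMap.mul' A H) ∘ₗ (TensorProduct.map (hopfPower A H k) (hopfPower A H l)) ∘ₗ
        (Coalgebra.comul : H →ₗ[A] H ⊗[A] H) = hopfPower A H (k + l) := by
  show hopfConv (hopfPower A H k) (hopfPower A H l) = hopfPower A H (k + l)
  induction l with
  | zero => exact hopfConv_one _
  | succ l ih =>
      rw [hopfPower_succ', ← hopfConv_assoc, ih, ← hopfPower_succ']
      rfl
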